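/- Let $|q|<1$, $p \geq 1$ an integer, and for $n \geq 1$ define $S_n = \sum_{k=-n-1}^{n} \frac{(-1)^k q^{(p+1/2)k^2+(p-1/2)k}}{(q;q)_{n-k}(q;q)_{n+k+1}}$ and $T_n = \sum_{k=-n+1}^{n} \frac{(-1)^k q^{(p+1/2)k^2+(p-1/2)k}}{(q;q)_{n-k}(q;q)_{n+k-1}}$. Then $(1-q^{2n}) S_n = T_n$. -/

import Mathlib

set_option maxHeartbeats 1600000

/-- The q-Pochhammer symbol `(q; q)_n`. -/
def qPoch (q : ℂ) (n : ℕ) : ℂ := ∏ j ∈ Finset.range n, (1 - q ^ (j + 1))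

lemma qPoch_succ (q : ℂ) (m : ℕ) : qPoch q (m + 1) = qPoch q m * (1 - q ^ (m + 1)) :=
  Finset.prod_range_succ _ _

lemma qPoch_zero (q : ℂ) : qPoch q 0 = 1 := Finset.prod_range_zero _

lemma qPoch_two (q : ℂ) (m : ℕ) :
    qPoch q (m + 2) = qPoch q m * ((1 - q ^ (m + 1)) * (1 - q ^ (m + 2))) := by
  rw [qPoch_succ, qPoch_succ]; ring

lemma one_sub_pow_ne {q : ℂ} (hq : ‖q‖ < 1) {j : ℕ} (hj : 1 ≤ j) : 1 - q ^ j ≠ 0 := by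
  intro h
  have hq1 : q ^ j = 1 := by linear_combination -h
  have : ‖q ^ j‖ < 1 := by
    rw [norm_pow]
    calc ‖q‖ ^ j ≤ ‖q‖ ^ 1 :=
          pow_le_pow_of_le_one (norm_nonneg q) hq.le hj
      _ = ‖q‖ := pow_one _
      _ < 1 := hq
  rw [hq1] at this
  simp at this

lemma qPoch_ne_zero {q : ℂ} (hq : ‖q‖ < 1) (m : ℕ) : qPoch q m ≠ 0 := by
  unfold qPoch
  exact Finset.prod_ne_zero_iff.2 fun j _ => one_sub_pow_ne hq (Nat.succ_le_succ (Nat.zero_le j))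

noncomputable def trmS (q : ℂ) (p n : ℕ) (k : ℤ) : ℂ :=
  (-1 : ℂ) ^ k * q ^ (((2 * p + 1) * k ^ 2 + (2 * p - 1) * k) / 2) /
          (qPoch q ((n : ℤ) - k).toNat * qPoch q ((n : ℤ) + k + 1).toNat)

noncomputable def trmT (q : ℂ) (p n : ℕ) (k : ℤ) : ℂ :=
  (-1 : ℂ) ^ k * q ^ (((2 * p + 1) * k ^ 2 + (2 * p - 1) * k) / 2) /
          (qPoch q ((n : ℤ) - k).toNat * qPoch q ((n : ℤ) + k - 1).toNat)

noncomputable def trmH (q : ℂ) (p n : ℕ) (k : ℤ) : ℂ :=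
  (1 - q ^ (2 * n)) * trmS q p n k - if -(n : ℤ) + 1 ≤ k then trmT q p n k else 0

lemma sign_reflect (m : ℕ) : (-1 : ℂ) ^ (-1 - (m : ℤ)) = -((-1 : ℂ) ^ m) := by
  rw [show (-1 - (m : ℤ)) = -(((m + 1 : ℕ) : ℤ)) by push_cast; ring, zpow_neg, zpow_natCast,
    ← inv_pow]
  norm_num
  rw [pow_succ]
  ring

lemma exp_reflect (p : ℕ) (m : ℕ) :
    ((2 * (p : ℤ) + 1) * (-1 - (m : ℤ)) ^ 2 + (2 * (p : ℤ) - 1) * (-1 - (m : ℤ))) / 2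
      = ((2 * (p : ℤ) + 1) * (m : ℤ) ^ 2 + (2 * (p : ℤ) - 1) * (m : ℤ)) / 2 + (2 * m + 1) := by
  rw [show (2 * (p : ℤ) + 1) * (-1 - (m : ℤ)) ^ 2 + (2 * (p : ℤ) - 1) * (-1 - (m : ℤ))
      = ((2 * (p : ℤ) + 1) * (m : ℤ) ^ 2 + (2 * (p : ℤ) - 1) * (m : ℤ)) + (2 * (m : ℤ) + 1) * 2 by
        ring]
  exact Int.add_mul_ediv_right _ _ two_ne_zero

lemma exp_nonneg (p : ℕ) (hp : 1 ≤ p) (m : ℕ) :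
    0 ≤ ((2 * (p : ℤ) + 1) * (m : ℤ) ^ 2 + (2 * (p : ℤ) - 1) * (m : ℤ)) / 2 := by
  have hp' : (1 : ℤ) ≤ (p : ℤ) := by exact_mod_cast hp
  have hm : (0 : ℤ) ≤ (m : ℤ) := Int.natCast_nonneg m
  apply Int.ediv_nonneg _ (by norm_num)
  nlinarith [sq_nonneg ((m : ℤ))]

lemma frac_key (Q n1 n2 n3 n4 d1 d2 d3 d4 : ℂ)
    (h1 : d1 ≠ 0) (h2 : d2 ≠ 0) (h3 : d3 ≠ 0) (h4 : d4 ≠ 0)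
    (h : Q * n1 * (d2 * d3 * d4) - n2 * (d1 * d3 * d4)
        + (Q * n3 * (d1 * d2 * d4) - n4 * (d1 * d2 * d3)) = 0) :
    Q * (n1 / d1) - n2 / d2 + (Q * (n3 / d3) - n4 / d4) = 0 := by
  have key : Q * (n1 / d1) - n2 / d2 + (Q * (n3 / d3) - n4 / d4)
      = (Q * n1 * (d2 * d3 * d4) - n2 * (d1 * d3 * d4)
        + (Q * n3 * (d1 * d2 * d4) - n4 * (d1 * d2 * d3))) / (d1 * (d2 * (d3 * d4))) := by
    field_simp
  rw [key, h, zero_div]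

lemma frac_key2 (Q n1 n2 n3 d1 d2 d3 : ℂ)
    (h1 : d1 ≠ 0) (h2 : d2 ≠ 0) (h3 : d3 ≠ 0)
    (h : Q * n1 * (d2 * d3) - n2 * (d1 * d3) + Q * n3 * (d1 * d2) = 0) :
    Q * (n1 / d1) - n2 / d2 + (Q * (n3 / d3) - 0) = 0 := by
  have key : Q * (n1 / d1) - n2 / d2 + (Q * (n3 / d3) - 0)
      = (Q * n1 * (d2 * d3) - n2 * (d1 * d3) + Q * n3 * (d1 * d2)) / (d1 * (d2 * d3)) := by
    field_simp
    ring
  rw [key, h, zero_div]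

lemma key (q : ℂ) (hq : ‖q‖ < 1) (p : ℕ) (hp : 1 ≤ p) (n : ℕ) (hn : 1 ≤ n)
    (k : ℤ) (hk0 : 0 ≤ k) (hkn : k ≤ (n : ℤ)) :
    trmH q p n k + trmH q p n (-1 - k) = 0 := by
  lift k to ℕ using hk0 with m
  have hmn : m ≤ n := by exact_mod_cast hkn
  -- abbreviations
  obtain ⟨e, he⟩ : ∃ e : ℕ, ((2 * (p : ℤ) + 1) * (m : ℤ) ^ 2 + (2 * (p : ℤ) - 1) * (m : ℤ)) / 2
      = (e : ℤ) := ⟨_, (Int.toNat_of_nonneg (exp_nonneg p hp m)).symm⟩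
  have hqe : q ^ (((2 * (p : ℤ) + 1) * (m : ℤ) ^ 2 + (2 * (p : ℤ) - 1) * (m : ℤ)) / 2) = q ^ e := by
    rw [he, zpow_natCast]
  have hqe' : q ^ (((2 * (p : ℤ) + 1) * (-1 - (m : ℤ)) ^ 2 + (2 * (p : ℤ) - 1) * (-1 - (m : ℤ))) / 2)
      = q ^ e * q ^ (2 * m + 1) := by
    rw [exp_reflect, he, show ((e : ℤ) + (2 * (m : ℤ) + 1)) = ((e + (2 * m + 1) : ℕ) : ℤ) by
      push_cast; ring, zpow_natCast, pow_add]
  simp only [trmH, trmS, trmT, hqe, hqe', sign_reflect, zpow_natCast]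
  rw [if_pos (by omega : -(n : ℤ) + 1 ≤ (m : ℤ))]
  rcases Nat.lt_or_ge (m + 1) n with hcase | hcase
  · -- main case : m + 2 ≤ n
    obtain ⟨d, rfl⟩ : ∃ d : ℕ, n = m + 2 + d := ⟨n - m - 2, by omega⟩
    rw [if_pos (by push_cast; omega : -((m + 2 + d : ℕ) : ℤ) + 1 ≤ -1 - (m : ℤ))]
    rw [show (((m + 2 + d : ℕ) : ℤ) - (m : ℤ)).toNat = d + 2 by omega,
        show (((m + 2 + d : ℕ) : ℤ) + (m : ℤ) + 1).toNat = (2 * m + d + 1) + 2 by omega,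
        show (((m + 2 + d : ℕ) : ℤ) + (m : ℤ) - 1).toNat = 2 * m + d + 1 by omega,
        show (((m + 2 + d : ℕ) : ℤ) - (-1 - (m : ℤ))).toNat = (2 * m + d + 1) + 2 by omega,
        show (((m + 2 + d : ℕ) : ℤ) + (-1 - (m : ℤ)) + 1).toNat = d + 2 by omega,
        show (((m + 2 + d : ℕ) : ℤ) + (-1 - (m : ℤ)) - 1).toNat = d by omega]
    rw [qPoch_two q d, qPoch_two q (2 * m + d + 1)]
    have hA := qPoch_ne_zero hq d
    have hB := qPoch_ne_zero hq (2 * m + d + 1)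
    have h1 := one_sub_pow_ne hq (by omega : 1 ≤ d + 1)
    have h2 := one_sub_pow_ne hq (by omega : 1 ≤ d + 2)
    have h3 := one_sub_pow_ne hq (by omega : 1 ≤ 2 * m + d + 1 + 1)
    have h4 := one_sub_pow_ne hq (by omega : 1 ≤ 2 * m + d + 1 + 2)
    refine frac_key _ _ _ _ _ _ _ _ _ ?_ ?_ ?_ ?_ ?_
    · exact mul_ne_zero (mul_ne_zero hA (mul_ne_zero h1 h2)) (mul_ne_zero hB (mul_ne_zero h3 h4))
    · exact mul_ne_zero (mul_ne_zero hA (mul_ne_zero h1 h2)) hB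
    · exact mul_ne_zero (mul_ne_zero hB (mul_ne_zero h3 h4)) (mul_ne_zero hA (mul_ne_zero h1 h2))
    · exact mul_ne_zero (mul_ne_zero hB (mul_ne_zero h3 h4)) hA
    · ring
  · -- boundary cases : m = n - 1 or m = n
    rw [if_neg (by omega : ¬ (-(n : ℤ) + 1 ≤ -1 - (m : ℤ)))]
    rcases Nat.lt_or_ge m n with hc2 | hc2
    · -- m = n - 1
      obtain rfl : n = m + 1 := by omega
      rw [show (((m + 1 : ℕ) : ℤ) - (m : ℤ)).toNat = 0 + 1 by omega,
          show (((m + 1 : ℕ) : ℤ) + (m : ℤ) + 1).toNat = 2 * m + 2 by omega,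
          show (((m + 1 : ℕ) : ℤ) + (m : ℤ) - 1).toNat = 2 * m by omega,
          show (((m + 1 : ℕ) : ℤ) - (-1 - (m : ℤ))).toNat = 2 * m + 2 by omega,
          show (((m + 1 : ℕ) : ℤ) + (-1 - (m : ℤ)) + 1).toNat = 0 + 1 by omega]
      rw [show 2 * m + 2 = 2 * m + 2 from rfl, qPoch_two q (2 * m), qPoch_succ q 0, qPoch_zero]
      have hB := qPoch_ne_zero hq (2 * m)
      have h1 := one_sub_pow_ne hq (by omega : 1 ≤ 0 + 1)
      have h3 := one_sub_pow_ne hq (by omega : 1 ≤ 2 * m + 1)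
      have h4 := one_sub_pow_ne hq (by omega : 1 ≤ 2 * m + 2)
      refine frac_key2 _ _ _ _ _ _ _ ?_ ?_ ?_ ?_
      · exact mul_ne_zero (mul_ne_zero one_ne_zero h1) (mul_ne_zero hB (mul_ne_zero h3 h4))
      · exact mul_ne_zero (mul_ne_zero one_ne_zero h1) hB
      · exact mul_ne_zero (mul_ne_zero hB (mul_ne_zero h3 h4)) (mul_ne_zero one_ne_zero h1)
      · ring
    · -- m = n
      obtain rfl : m = n := by omega
      obtain ⟨f, rfl⟩ : ∃ f : ℕ, m = f + 1 := ⟨m - 1, by omega⟩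
      rw [show (((f + 1 : ℕ) : ℤ) - ((f + 1 : ℕ) : ℤ)).toNat = 0 by omega,
          show (((f + 1 : ℕ) : ℤ) + ((f + 1 : ℕ) : ℤ) + 1).toNat = (2 * f + 1) + 2 by omega,
          show (((f + 1 : ℕ) : ℤ) + ((f + 1 : ℕ) : ℤ) - 1).toNat = 2 * f + 1 by omega,
          show (((f + 1 : ℕ) : ℤ) - (-1 - ((f + 1 : ℕ) : ℤ))).toNat = (2 * f + 1) + 2 by omega,
          show (((f + 1 : ℕ) : ℤ) + (-1 - ((f + 1 : ℕ) : ℤ)) + 1).toNat = 0 by omega]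
      rw [qPoch_two q (2 * f + 1), qPoch_zero]
      have hB := qPoch_ne_zero hq (2 * f + 1)
      have h3 := one_sub_pow_ne hq (by omega : 1 ≤ 2 * f + 1 + 1)
      have h4 := one_sub_pow_ne hq (by omega : 1 ≤ 2 * f + 1 + 2)
      refine frac_key2 _ _ _ _ _ _ _ ?_ ?_ ?_ ?_
      · exact mul_ne_zero one_ne_zero (mul_ne_zero hB (mul_ne_zero h3 h4))
      · exact mul_ne_zero one_ne_zero hB
      · exact mul_ne_zero (mul_ne_zero hB (mul_ne_zero h3 h4)) one_ne_zero
      · ring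

theorem auxiliary3 (q : ℂ) (hq : ‖q‖ < 1) (p : ℕ) (hp : 1 ≤ p) (n : ℕ) (hn : 1 ≤ n) :
    (1 - q ^ (2 * n)) * ∑ k ∈ Finset.Icc (-(n : ℤ) - 1) n,
        (-1 : ℂ) ^ k * q ^ (((2 * p + 1) * k ^ 2 + (2 * p - 1) * k) / 2) /
          (qPoch q ((n : ℤ) - k).toNat * qPoch q ((n : ℤ) + k + 1).toNat) =
      ∑ k ∈ Finset.Icc (-(n : ℤ) + 1) n,
        (-1 : ℂ) ^ k * q ^ (((2 * p + 1) * k ^ 2 + (2 * p - 1) * k) / 2) /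
          (qPoch q ((n : ℤ) - k).toNat * qPoch q ((n : ℤ) + k - 1).toNat) := by
  show (1 - q ^ (2 * n)) * ∑ k ∈ Finset.Icc (-(n : ℤ) - 1) n, trmS q p n k
      = ∑ k ∈ Finset.Icc (-(n : ℤ) + 1) n, trmT q p n k
  have hstep : ∑ k ∈ Finset.Icc (-(n : ℤ) + 1) n, trmT q p n k
      = ∑ k ∈ Finset.Icc (-(n : ℤ) - 1) n,
          (if -(n : ℤ) + 1 ≤ k then trmT q p n k else 0) := by
    calc ∑ k ∈ Finset.Icc (-(n : ℤ) + 1) n, trmT q p n k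
        = ∑ k ∈ Finset.Icc (-(n : ℤ) + 1) n,
            (if -(n : ℤ) + 1 ≤ k then trmT q p n k else 0) :=
          Finset.sum_congr rfl fun x hx => by
            simp only [Finset.mem_Icc] at hx
            rw [if_pos (by omega)]
      _ = ∑ k ∈ Finset.Icc (-(n : ℤ) - 1) n,
            (if -(n : ℤ) + 1 ≤ k then trmT q p n k else 0) :=
          Finset.sum_subset (Finset.Icc_subset_Icc (by omega) le_rfl)
            (fun x hx hx' => by
              simp only [Finset.mem_Icc] at hx hx'
              rw [if_neg (by omega)])
  rw [hstep, Finset.mul_sum, ← sub_eq_zero, ← Finset.sum_sub_distrib]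
  apply Finset.sum_involution (fun k _ => -1 - k)
    (fun k hk => ?_) (fun k hk _ => by beta_reduce; omega)
    (fun k hk => by simp only [Finset.mem_Icc] at hk ⊢; omega)
    (fun k hk => by beta_reduce; omega)
  simp only [Finset.mem_Icc] at hk
  show trmH q p n k + trmH q p n (-1 - k) = 0
  rcases le_or_gt 0 k with h0 | h0
  · exact key q hq p hp n hn k h0 hk.2
  · have hkey := key q hq p hp n hn (-1 - k) (by omega) (by omega)
    rw [show -1 - (-1 - k) = k by ring] at hkey
    linear_combination hkey
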